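/- arXiv:2503.19518 — 4 statements merged into one kernel-verified Lean document; each statement's English description precedes it below -/
import Mathlib

section
/- Let a₀(x) = exp(-x)·𝟙_{x≥0}. A bounded C¹ function R : ℝ → ℝ with bounded derivative satisfies R = a₀ * Φ'(R) (convolution on ℝ) if and only if R satisfies the ODE R + R' = Φ'(R) on ℝ. -/
open MeasureTheory Real

theorem fixed_point_iff_ODE
    (Φ' : ℝ → ℝ) (hΦ' : Continuous Φ')
    (R : ℝ → ℝ) (hR : ContDiff ℝ 1 R)
    (hRb : ∃ M, ∀ x, |R x| ≤ M) (hR'b : ∃ M, ∀ x, |deriv R x| ≤ M) :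
    (∀ x : ℝ, R x = ∫ t : ℝ, (if 0 ≤ t then Real.exp (-t) else 0) * Φ' (R (x - t)))
      ↔ (∀ x : ℝ, R x + deriv R x = Φ' (R x)) := by
  obtain ⟨M, hM⟩ := hRb
  set g : ℝ → ℝ := fun x => Φ' (R x) with hgdef
  have hRc : Continuous R := hR.continuous
  have hRd : ∀ x, HasDerivAt R (deriv R x) x := fun x =>
    ((hR.differentiable one_ne_zero) x).hasDerivAt
  have hgc : Continuous g := hΦ'.comp hRc
  -- bound for g
  obtain ⟨K, hK⟩ : ∃ K, ∀ x, |g x| ≤ K := by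
    obtain ⟨C, hC⟩ := (isCompact_Icc (a := -M) (b := M)).exists_bound_of_continuousOn
      hΦ'.continuousOn
    exact ⟨C, fun x => hC (R x) (abs_le.mp (hM x))⟩
  have hK0 : 0 ≤ K := le_trans (abs_nonneg _) (hK 0)
  have hM0 : 0 ≤ M := le_trans (abs_nonneg _) (hM 0)
  -- the kernel-weighted function
  set f : ℝ → ℝ := fun s => Real.exp s * g s with hfdef
  have hfc : Continuous f := (continuous_exp).mul hgc
  have hf_int : ∀ x : ℝ, IntegrableOn f (Set.Iic x) := by
    intro x
    refine ((integrableOn_exp_Iic x).const_mul K).mono' (hfc.aestronglyMeasurable.restrict) ?_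
    filter_upwards [ae_restrict_mem measurableSet_Iic] with s _
    have : |f s| ≤ Real.exp s * K := by
      rw [hfdef]
      simp only [abs_mul, abs_exp]
      exact mul_le_mul_of_nonneg_left (hK s) (exp_pos s).le
    simpa [Real.norm_eq_abs, mul_comm] using this
  set H : ℝ → ℝ := fun x => ∫ s in Set.Iic x, f s with hHdef
  -- H has derivative f x
  have hH : ∀ x, HasDerivAt H (f x) x := by
    intro x
    have hkey : ∀ y : ℝ, H y = H 0 + ∫ s in (0:ℝ)..y, f s := by
      intro y
      have := intervalIntegral.integral_Iic_sub_Iic (hf_int 0) (hf_int y)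
      rw [hHdef]; simp only; linarith [this]
    have hd : HasDerivAt (fun y => H 0 + ∫ s in (0:ℝ)..y, f s) (f x) x := by
      have := intervalIntegral.integral_hasDerivAt_right
        (hfc.intervalIntegrable 0 x)
        (hfc.stronglyMeasurableAtFilter volume (nhds x))
        hfc.continuousAt
      simpa using (this.const_add (H 0))
    exact hd.congr_of_eventuallyEq (Filter.Eventually.of_forall hkey)
  -- bound for H
  have hHb : ∀ x, |H x| ≤ K * Real.exp x := by
    intro x
    have h1 : ‖∫ s in Set.Iic x, f s‖ ≤ ∫ s in Set.Iic x, K * Real.exp s := by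
      refine norm_integral_le_of_norm_le ((integrableOn_exp_Iic x).const_mul K) ?_
      filter_upwards [ae_restrict_mem measurableSet_Iic] with s _
      rw [hfdef]
      simp only [Real.norm_eq_abs, abs_mul, abs_exp, mul_comm K]
      exact mul_le_mul_of_nonneg_left (hK s) (exp_pos s).le
    have h2 : ∫ s in Set.Iic x, K * Real.exp s = K * Real.exp x := by
      rw [MeasureTheory.integral_const_mul, integral_exp_Iic]
    rw [hHdef]
    calc |∫ s in Set.Iic x, f s| ≤ ∫ s in Set.Iic x, K * Real.exp s := h1
      _ = K * Real.exp x := h2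
  -- rewriting the convolution integral
  have hconv : ∀ x : ℝ,
      (∫ t : ℝ, (if 0 ≤ t then Real.exp (-t) else 0) * Φ' (R (x - t)))
        = Real.exp (-x) * H x := by
    intro x
    set F : ℝ → ℝ := fun s => (if 0 ≤ x - s then Real.exp (-(x - s)) else 0) * g s with hFdef
    have h1 : (∫ t : ℝ, (if 0 ≤ t then Real.exp (-t) else 0) * Φ' (R (x - t)))
        = ∫ t : ℝ, F (x - t) := by
      congr 1; funext t; rw [hFdef]; simp [hgdef]
    have h2 : (∫ t : ℝ, F (x - t)) = ∫ s : ℝ, F s :=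
      integral_sub_left_eq_self F volume x
    have h3 : (∫ s : ℝ, F s) = ∫ s in Set.Iic x, Real.exp (-x) * f s := by
      rw [← MeasureTheory.integral_indicator measurableSet_Iic]
      congr 1; funext s
      rw [hFdef, Set.indicator_apply, hfdef]
      by_cases hs : s ≤ x
      · have h0 : (0:ℝ) ≤ x - s := by linarith
        simp only [Set.mem_Iic, hs, if_pos h0, if_true]
        rw [show -(x - s) = -x + s by ring, Real.exp_add]; ring
      · have h0 : ¬ (0:ℝ) ≤ x - s := by intro h; exact hs (by linarith)
        simp [Set.mem_Iic, hs, if_neg h0]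
    rw [h1, h2, h3, MeasureTheory.integral_const_mul, hHdef]
  have hexp : ∀ x : ℝ, Real.exp (-x) * Real.exp x = 1 := by
    intro x; rw [← Real.exp_add]; simp
  constructor
  · -- fixed point → ODE
    intro h x
    have hRe : R = fun x => Real.exp (-x) * H x := by
      funext y; rw [h y, hconv y]
    have hdR : HasDerivAt R (-(Real.exp (-x)) * H x + Real.exp (-x) * f x) x := by
      rw [hRe]
      have he : HasDerivAt (fun y : ℝ => Real.exp (-y)) (-(Real.exp (-x))) x := by
        have := (Real.hasDerivAt_exp (-x)).comp x (hasDerivAt_neg x)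
        simpa [mul_comm, Function.comp_def] using this
      simpa [Pi.mul_def] using he.mul (hH x)
    have hder : deriv R x = -(Real.exp (-x)) * H x + Real.exp (-x) * f x := hdR.deriv
    have hRx : R x = Real.exp (-x) * H x := by rw [hRe]
    have hgoal : R x + deriv R x = g x := by
      rw [hder]
      conv_lhs => rw [hRx]
      rw [hfdef]
      simp only
      rw [show Real.exp (-x) * H x + (-(Real.exp (-x)) * H x
          + Real.exp (-x) * (Real.exp x * g x)) = (Real.exp (-x) * Real.exp x) * g x by ring,
        hexp x, one_mul]
    exact hgoal
  · -- ODE → fixed point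
    intro h x
    set D : ℝ → ℝ := fun y => Real.exp y * R y - H y with hDdef
    have hDd : ∀ y, HasDerivAt D 0 y := by
      intro y
      have h1 : HasDerivAt (fun y => Real.exp y * R y)
          (Real.exp y * R y + Real.exp y * deriv R y) y := by
        simpa [Pi.mul_def] using (Real.hasDerivAt_exp y).mul (hRd y)
      have h2 := h1.sub (hH y)
      have h0 : Real.exp y * R y + Real.exp y * deriv R y - f y = 0 := by
        rw [hfdef, show Real.exp y * R y + Real.exp y * deriv R y
            = Real.exp y * (R y + deriv R y) by ring, h y]
        simp [hgdef]
      rw [hDdef]; simpa [h0, Pi.sub_def] using h2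
    have hDdiff : Differentiable ℝ D := fun y => (hDd y).differentiableAt
    have hDderiv : ∀ y, deriv D y = 0 := fun y => (hDd y).deriv
    have hconst : ∀ y, D y = D x := fun y =>
      is_const_of_deriv_eq_zero hDdiff hDderiv y x
    -- D is everywhere small, hence zero
    have hbound : ∀ y, |D x| ≤ (M + K) * Real.exp y := by
      intro y
      rw [← hconst y, hDdef]
      calc |Real.exp y * R y - H y| ≤ |Real.exp y * R y| + |H y| := abs_sub _ _
        _ ≤ Real.exp y * M + K * Real.exp y := by
            refine add_le_add ?_ (hHb y)
            rw [abs_mul, abs_exp]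
            exact mul_le_mul_of_nonneg_left (hM y) (exp_pos y).le
        _ = (M + K) * Real.exp y := by ring
    have hD0 : D x = 0 := by
      have htend : Filter.Tendsto (fun y => (M + K) * Real.exp y) Filter.atBot (nhds 0) := by
        simpa using (Real.tendsto_exp_atBot).const_mul (M + K)
      have hle : |D x| ≤ 0 :=
        ge_of_tendsto htend (Filter.Eventually.of_forall hbound)
      exact abs_eq_zero.mp (le_antisymm hle (abs_nonneg _))
    have hRx : R x = Real.exp (-x) * H x := by
      have : Real.exp x * R x = H x := by
        have := hD0; rw [hDdef] at this; simp only at this; linarith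
      have h2 : Real.exp (-x) * (Real.exp x * R x) = Real.exp (-x) * H x := by rw [this]
      rwa [← mul_assoc, hexp x, one_mul] at h2
    rw [hconv x, hRx]
end

section
/- Let μ ∈ ℝ with μ ≠ 1 and define D_ε(z) = εz² - εμ sin²(z) + 2iz sin²(z) for z ∈ ℂ. Then there exists ε₀ > 0 such that for all 0 < ε < ε₀, D_ε has a double zero at z = 0 and exactly one further zero z_ε in the ball B(0, 0.9π), this zero is simple, and z_ε = (iε/2)(1 - μ) + O(ε²) as ε → 0. -/
open Complex Metric

noncomputable def Dsym (μ : ℝ) (ε : ℝ) (z : ℂ) : ℂ :=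
  (ε : ℂ) * z ^ 2 - (ε : ℂ) * (μ : ℂ) * Complex.sin z ^ 2
    + 2 * Complex.I * z * Complex.sin z ^ 2

noncomputable def gsin : ℂ → ℂ := dslope Complex.sin 0

lemma gsin_zero : gsin 0 = 1 := by
  simp [gsin, dslope_same]

lemma sin_eq_gsin (z : ℂ) : Complex.sin z = z * gsin z := by
  rcases eq_or_ne z 0 with rfl | hz
  · simp
  · rw [gsin, dslope_of_ne _ hz, slope_def_field]
    field_simp
    rw [Complex.sin_zero, sub_zero, sub_zero, mul_comm]

lemma gsin_analyticAt_zero : AnalyticAt ℂ gsin 0 := by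
  obtain ⟨p, hp⟩ := (Complex.differentiable_sin.analyticAt (0:ℂ))
  exact ⟨_, hp.has_fpower_series_dslope_fslope⟩

lemma gsin_continuousAt (z : ℂ) : ContinuousAt gsin z := by
  rcases eq_or_ne z 0 with rfl | hz
  · exact (continuousAt_dslope_same).2 (Complex.differentiable_sin.differentiableAt)
  · exact (continuousAt_dslope_of_ne hz).2 (Complex.continuous_sin.continuousAt)

lemma gsin_ne_zero {z : ℂ} (hz : ‖z‖ < Real.pi) : gsin z ≠ 0 := by
  intro h
  have hs : Complex.sin z = 0 := by rw [sin_eq_gsin z, h, mul_zero]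
  obtain ⟨k, hk⟩ := Complex.sin_eq_zero_iff.1 hs
  rcases eq_or_ne k 0 with rfl | hk0
  · simp at hk; subst hk; simp [gsin_zero] at h
  · have : (1:ℝ) ≤ |(k:ℝ)| := by exact_mod_cast Int.one_le_abs hk0
    have : Real.pi ≤ ‖z‖ := by
      rw [hk]
      rw [norm_mul]
      have : ‖(k:ℂ)‖ = |(k:ℝ)| := by
        rw [show ((k:ℂ)) = ((k:ℝ):ℂ) by push_cast; ring, Complex.norm_real]
        rfl
      rw [this, show ‖(Real.pi:ℂ)‖ = Real.pi by rw [Complex.norm_real]; exact abs_of_pos Real.pi_pos]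
      nlinarith [Real.pi_pos]
    linarith

noncomputable def Phi (μ : ℝ) (z : ℂ) : ℂ := Complex.I / 2 * ((gsin z ^ 2)⁻¹ - (μ:ℂ))

noncomputable def Psi (μ : ℝ) (z : ℂ) : ℂ :=
  1 + (μ:ℂ) * gsin z ^ 2 - 2 * Complex.cos z / gsin z

lemma Phi_zero (μ : ℝ) : Phi μ 0 = Complex.I / 2 * (1 - (μ:ℝ)) := by
  simp [Phi, gsin_zero]

lemma Psi_zero (μ : ℝ) : Psi μ 0 = (μ:ℂ) - 1 := by
  simp [Psi, gsin_zero]; ring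

lemma Phi_analyticAt_zero (μ : ℝ) : AnalyticAt ℂ (Phi μ) 0 := by
  have h1 : AnalyticAt ℂ (fun z => (gsin z ^ 2)⁻¹) 0 :=
    (gsin_analyticAt_zero.pow 2).inv (by simp [gsin_zero])
  exact analyticAt_const.mul (h1.sub analyticAt_const)

lemma Phi_continuousAt (μ : ℝ) {z : ℂ} (hz : ‖z‖ < Real.pi) : ContinuousAt (Phi μ) z := by
  have hg := gsin_continuousAt z
  have hgz := gsin_ne_zero hz
  exact continuousAt_const.mul
    (((hg.pow 2).inv₀ (pow_ne_zero 2 hgz)).sub continuousAt_const)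

lemma Psi_continuousAt_zero (μ : ℝ) : ContinuousAt (Psi μ) 0 := by
  have hg := gsin_continuousAt 0
  have hgz : gsin 0 ≠ 0 := by simp [gsin_zero]
  exact (continuousAt_const.add (continuousAt_const.mul (hg.pow 2))).sub
    ((continuousAt_const.mul Complex.continuous_cos.continuousAt).div hg hgz)

noncomputable def dD (μ ε : ℝ) (z : ℂ) : ℂ :=
  2*(ε:ℂ)*z - 2*(ε:ℂ)*(μ:ℂ)*Complex.sin z*Complex.cos z + 2*Complex.I*Complex.sin z^2
      + 4*Complex.I*z*Complex.sin z*Complex.cos z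

lemma Dsym_factor (μ ε : ℝ) (z : ℂ) :
    Dsym μ ε z = z ^ 2 * ((ε:ℂ) - (ε:ℂ)*(μ:ℂ)*gsin z^2 + 2*Complex.I*z*gsin z^2) := by
  simp only [Dsym, sin_eq_gsin]; ring

lemma fixed_iff (μ ε : ℝ) {z : ℂ} (hg : gsin z ≠ 0) :
    (ε:ℂ) - (ε:ℂ)*(μ:ℂ)*gsin z^2 + 2*Complex.I*z*gsin z^2 = 0 ↔ z = (ε:ℂ) * Phi μ z := by
  rw [Phi]
  rw [div_mul_eq_mul_div, mul_div_assoc]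
  constructor
  · intro h
    have hg2 : gsin z ^ 2 ≠ 0 := pow_ne_zero 2 hg
    field_simp
    linear_combination (-Complex.I) * h + (2*z*gsin z^2) * Complex.I_sq
  · intro h
    have hg2 : gsin z ^ 2 ≠ 0 := pow_ne_zero 2 hg
    field_simp at h
    linear_combination Complex.I * h + ((ε:ℂ) - (ε:ℂ)*(μ:ℂ)*gsin z^2) * Complex.I_sq

lemma deriv_identity (μ ε : ℝ) {z : ℂ} (hg : gsin z ≠ 0)
    (hH : (ε:ℂ) - (ε:ℂ)*(μ:ℂ)*gsin z^2 + 2*Complex.I*z*gsin z^2 = 0) :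
    dD μ ε z = z * ((ε:ℂ) * Psi μ z) := by
  simp only [dD, sin_eq_gsin, Psi]
  field_simp
  linear_combination (gsin z * z + 2 * Complex.cos z * z) * hH


lemma hasDerivAt_Dsym (μ ε : ℝ) (z : ℂ) : HasDerivAt (Dsym μ ε) (dD μ ε z) z := by
  have hs := Complex.hasDerivAt_sin z
  have hs2 : HasDerivAt (fun w => Complex.sin w ^ 2) (2 * Complex.sin z * Complex.cos z) z := by
    simpa [mul_comm, mul_assoc] using hs.fun_pow 2
  have h1 : HasDerivAt (fun w : ℂ => w ^ 2) (2 * z) z := by simpa using hasDerivAt_pow 2 z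
  have h := ((h1.const_mul (ε:ℂ)).fun_sub (hs2.const_mul ((ε:ℂ)*(μ:ℂ)))).fun_add
    (((hasDerivAt_id z).fun_mul hs2).const_mul (2*Complex.I))
  simp only [id_eq] at h
  have hfun : (fun w : ℂ => ((ε:ℂ)*w^2 - (ε:ℂ)*(μ:ℂ)*Complex.sin w^2)
      + 2*Complex.I*(w*Complex.sin w^2)) = Dsym μ ε := by
    funext w; simp only [Dsym]; ring
  rw [hfun] at h
  refine h.congr_deriv ?_
  simp only [dD, id_eq]; ring

lemma deriv_Dsym (μ ε : ℝ) : deriv (Dsym μ ε) = dD μ ε := by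
  funext z; exact (hasDerivAt_Dsym μ ε z).deriv

lemma hasDerivAt_dD_zero (μ ε : ℝ) :
    HasDerivAt (dD μ ε) (2*(ε:ℂ) - 2*(ε:ℂ)*(μ:ℂ)) 0 := by
  have hs := Complex.hasDerivAt_sin (0:ℂ)
  have hc := Complex.hasDerivAt_cos (0:ℂ)
  have hsc : HasDerivAt (fun w => Complex.sin w * Complex.cos w)
      (Complex.cos 0 * Complex.cos 0 + Complex.sin 0 * (-Complex.sin 0)) 0 := hs.mul hc
  have hs2 : HasDerivAt (fun w => Complex.sin w ^ 2) (2 * Complex.sin 0 * Complex.cos 0) 0 := by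
    simpa [mul_comm, mul_assoc] using hs.fun_pow 2
  have hid : HasDerivAt (fun w : ℂ => w) 1 0 := hasDerivAt_id 0
  have hzsc : HasDerivAt (fun w : ℂ => w * (Complex.sin w * Complex.cos w))
      (1 * (Complex.sin 0 * Complex.cos 0) + 0 * (Complex.cos 0 * Complex.cos 0 + Complex.sin 0 * (-Complex.sin 0))) 0 :=
    hid.mul hsc
  have h := (((hid.const_mul (2*(ε:ℂ))).fun_sub (hsc.const_mul (2*(ε:ℂ)*(μ:ℂ)))).fun_add
      (hs2.const_mul (2*Complex.I))).fun_add (hzsc.const_mul (4*Complex.I))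
  have hfun : (fun w : ℂ => (2*(ε:ℂ)*w - 2*(ε:ℂ)*(μ:ℂ)*(Complex.sin w * Complex.cos w)
      + 2*Complex.I*Complex.sin w^2) + 4*Complex.I*(w*(Complex.sin w*Complex.cos w))) = dD μ ε := by
    funext w; simp only [dD]; ring
  rw [hfun] at h
  refine h.congr_deriv ?_
  simp [Complex.sin_zero, Complex.cos_zero]

lemma iteratedDeriv_two (μ ε : ℝ) :
    iteratedDeriv 2 (Dsym μ ε) 0 = 2*(ε:ℂ) - 2*(ε:ℂ)*(μ:ℂ) := by
  rw [iteratedDeriv_succ, iteratedDeriv_one, deriv_Dsym]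
  exact (hasDerivAt_dD_zero μ ε).deriv

theorem denominator_zero_bifurcation (μ : ℝ) (hμ : μ ≠ 1) :
    ∃ ε₀ > (0:ℝ), ∃ (zε : ℝ → ℂ) (C : ℝ),
      ∀ ε : ℝ, 0 < ε → ε < ε₀ →
        -- double zero at the origin
        Dsym μ ε 0 = 0 ∧ deriv (Dsym μ ε) 0 = 0 ∧
        iteratedDeriv 2 (Dsym μ ε) 0 ≠ 0 ∧
        -- a further zero in B(0, 0.9π), which is simple
        zε ε ∈ ball (0 : ℂ) (0.9 * Real.pi) ∧ zε ε ≠ 0 ∧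
        Dsym μ ε (zε ε) = 0 ∧ deriv (Dsym μ ε) (zε ε) ≠ 0 ∧
        -- and it is the only zero besides the origin
        (∀ z ∈ ball (0 : ℂ) (0.9 * Real.pi), z ≠ 0 → Dsym μ ε z = 0 → z = zε ε) ∧
        -- expansion z_ε = (iε/2)(1-μ) + O(ε²)
        ‖zε ε - Complex.I * ε / 2 * (1 - μ)‖ ≤ C * ε ^ 2 := by
  have hπ := Real.pi_pos
  have hμC : ((μ:ℂ)) ≠ 1 := by exact_mod_cast hμ
  -- Lipschitz constant for Phi near 0
  obtain ⟨K, t, ht, hlip⟩ :=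
    (((Phi_analyticAt_zero μ).contDiffAt (n := 1)).restrict_scalars ℝ).exists_lipschitzOnWith
  -- Psi nonvanishing near 0
  have hPsi0 : Psi μ 0 ≠ 0 := by
    rw [Psi_zero]; exact sub_ne_zero.2 hμC
  have hPsiU : ∀ᶠ z in nhds (0:ℂ), Psi μ z ≠ 0 :=
    (Psi_continuousAt_zero μ).eventually_ne hPsi0
  have htU : t ∩ {z : ℂ | Psi μ z ≠ 0} ∈ nhds (0:ℂ) := Filter.inter_mem ht hPsiU
  obtain ⟨δ, hδpos, hδsub⟩ := Metric.mem_nhds_iff.1 htU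
  set r : ℝ := min (δ/2) (0.45 * Real.pi) with hr_def
  have hrpos : 0 < r := lt_min (by linarith) (by linarith)
  have hrsub : closedBall (0:ℂ) r ⊆ t ∩ {z : ℂ | Psi μ z ≠ 0} := by
    refine subset_trans ?_ hδsub
    intro z hz
    have : ‖z‖ ≤ r := by simpa using hz
    have : ‖z‖ < δ := lt_of_le_of_lt this (lt_of_le_of_lt (min_le_left _ _) (by linarith))
    simpa [mem_ball, dist_zero_right] using this
  have hrπ : r ≤ 0.45 * Real.pi := min_le_right _ _
  -- bound for Phi on the big ball
  have hbig : ∀ z ∈ closedBall (0:ℂ) (0.9 * Real.pi), ‖z‖ < Real.pi := by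
    intro z hz
    have : ‖z‖ ≤ 0.9 * Real.pi := by simpa using hz
    linarith
  have hcont : ContinuousOn (Phi μ) (closedBall (0:ℂ) (0.9 * Real.pi)) :=
    fun z hz => (Phi_continuousAt μ (hbig z hz)).continuousWithinAt
  obtain ⟨M₀, hM₀⟩ := (isCompact_closedBall (0:ℂ) (0.9 * Real.pi)).exists_bound_of_continuousOn hcont
  set M : ℝ := max M₀ 0 with hM_def
  have hMnn : 0 ≤ M := le_max_right _ _
  have hΦb : ∀ z ∈ closedBall (0:ℂ) (0.9 * Real.pi), ‖Phi μ z‖ ≤ M :=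
    fun z hz => le_trans (hM₀ z hz) (le_max_left _ _)
  have hKnn : (0:ℝ) ≤ K := K.coe_nonneg
  set ε₀ : ℝ := min (r/(M+1)) (min (1/(2*((K:ℝ)+1))) (|1-μ|/(4*((K:ℝ)+1)*(M+1)))) with hε₀_def
  have habs : 0 < |1-μ| := abs_pos.2 (sub_ne_zero.2 (Ne.symm hμ))
  have hε₀pos : 0 < ε₀ := by
    refine lt_min (by positivity) (lt_min (by positivity) (by positivity))
  -- the key per-ε construction
  have key : ∀ ε : ℝ, 0 < ε → ε < ε₀ → ∃ y : ℂ,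
      Dsym μ ε 0 = 0 ∧ deriv (Dsym μ ε) 0 = 0 ∧
      iteratedDeriv 2 (Dsym μ ε) 0 ≠ 0 ∧
      y ∈ ball (0 : ℂ) (0.9 * Real.pi) ∧ y ≠ 0 ∧
      Dsym μ ε y = 0 ∧ deriv (Dsym μ ε) y ≠ 0 ∧
      (∀ z ∈ ball (0 : ℂ) (0.9 * Real.pi), z ≠ 0 → Dsym μ ε z = 0 → z = y) ∧
      ‖y - Complex.I * ε / 2 * (1 - μ)‖ ≤ ((K:ℝ)*M) * ε ^ 2 := by
    intro ε hε hεlt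
    have hεC : ((ε:ℂ)) ≠ 0 := by exact_mod_cast hε.ne'
    have hεr : ε * M < r := by
      have h1 : ε < r/(M+1) := lt_of_lt_of_le hεlt (min_le_left _ _)
      have : ε * M ≤ ε * (M+1) := by nlinarith
      calc ε * M ≤ ε * (M+1) := this
        _ < (r/(M+1)) * (M+1) := by
            apply mul_lt_mul_of_pos_right h1; linarith
        _ = r := by field_simp
    have hεK : ε * (K:ℝ) < 1/2 := by
      have h1 : ε < 1/(2*((K:ℝ)+1)) := lt_of_lt_of_le hεlt (le_trans (min_le_right _ _) (min_le_left _ _))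
      have : ε * (K:ℝ) ≤ ε * ((K:ℝ)+1) := by nlinarith
      calc ε * (K:ℝ) ≤ ε * ((K:ℝ)+1) := this
        _ < (1/(2*((K:ℝ)+1))) * ((K:ℝ)+1) := by
            apply mul_lt_mul_of_pos_right h1; linarith
        _ = 1/2 := by field_simp
    -- set up the contraction
    set s : Set ℂ := closedBall (0:ℂ) r with hs_def
    set f : ℂ → ℂ := fun z => (ε:ℂ) * Phi μ z with hf_def
    have hsbig : s ⊆ closedBall (0:ℂ) (0.9 * Real.pi) := by
      apply closedBall_subset_closedBall; linarith
    have hnorm_f : ∀ z, ‖f z‖ = ε * ‖Phi μ z‖ := by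
      intro z
      rw [hf_def]
      simp only [norm_mul, Complex.norm_real]
      rw [Real.norm_of_nonneg hε.le]
    have hmaps : Set.MapsTo f s s := by
      intro z hz
      have hb := hΦb z (hsbig hz)
      have : ‖f z‖ ≤ ε * M := by
        rw [hnorm_f]; exact mul_le_mul_of_nonneg_left hb hε.le
      simp only [hs_def, mem_closedBall, dist_zero_right]
      linarith
    have hdist : ∀ x ∈ s, ∀ y ∈ s, dist (Phi μ x) (Phi μ y) ≤ (K:ℝ) * dist x y := by
      intro x hx y hy
      exact (lipschitzOnWith_iff_dist_le_mul.1 hlip) x ((hrsub hx).1) y ((hrsub hy).1)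
    have hcontract : ContractingWith (ε.toNNReal * K) (hmaps.restrict f s s) := by
      constructor
      · rw [← NNReal.coe_lt_coe]
        push_cast
        rw [Real.coe_toNNReal ε hε.le]
        simpa using hεK.trans_le (by norm_num)
      · apply LipschitzWith.of_dist_le_mul
        rintro ⟨x, hx⟩ ⟨y, hy⟩
        simp only [Set.MapsTo.restrict, Subtype.dist_eq, Subtype.map]
        have : dist (f x) (f y) = ε * dist (Phi μ x) (Phi μ y) := by
          simp only [hf_def, dist_eq_norm, ← mul_sub, norm_mul, Complex.norm_real]
          rw [Real.norm_of_nonneg hε.le]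
        rw [this]
        push_cast
        rw [Real.coe_toNNReal ε hε.le]
        rw [mul_assoc]
        exact mul_le_mul_of_nonneg_left (hdist x hx y hy) hε.le
    obtain ⟨y, hys, hyfix, -, -⟩ :=
      hcontract.exists_fixedPoint' (IsClosed.isComplete Metric.isClosed_closedBall) hmaps
        (mem_closedBall_self hrpos.le) (edist_ne_top _ _)
    have hyfix' : (ε:ℂ) * Phi μ y = y := hyfix
    have hynorm_r : ‖y‖ ≤ r := by simpa [hs_def] using hys
    have hyπ : ‖y‖ < Real.pi := by nlinarith
    have hgy : gsin y ≠ 0 := gsin_ne_zero hyπ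
    have hyεM : ‖y‖ ≤ ε * M := by
      rw [← hyfix', show ((ε:ℂ) * Phi μ y : ℂ) = f y from rfl, hnorm_f]
      exact mul_le_mul_of_nonneg_left (hΦb y (hsbig hys)) hε.le
    -- y ≠ 0
    have hyne : y ≠ 0 := by
      intro h0
      rw [h0] at hyfix'
      have : Phi μ 0 = 0 := by
        rcases mul_eq_zero.1 hyfix' with h | h
        · exact absurd h hεC
        · exact h
      rw [Phi_zero] at this
      have : (1:ℂ) - (μ:ℝ) = 0 := by
        have hI : Complex.I / 2 ≠ 0 := div_ne_zero Complex.I_ne_zero two_ne_zero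
        exact (mul_eq_zero.1 this).resolve_left hI
      rw [sub_eq_zero] at this
      exact hμC (by exact_mod_cast this.symm)
    -- H y = 0 and Dsym y = 0
    have hHy : (ε:ℂ) - (ε:ℂ)*(μ:ℂ)*gsin y^2 + 2*Complex.I*y*gsin y^2 = 0 :=
      (fixed_iff μ ε hgy).2 hyfix'.symm
    have hDy : Dsym μ ε y = 0 := by rw [Dsym_factor, hHy, mul_zero]
    -- derivative at y nonzero
    have hPsiy : Psi μ y ≠ 0 := (hrsub hys).2
    have hderivy : deriv (Dsym μ ε) y ≠ 0 := by
      rw [deriv_Dsym, deriv_identity μ ε hgy hHy]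
      exact mul_ne_zero hyne (mul_ne_zero hεC hPsiy)
    -- second derivative at 0 nonzero
    have hD2 : iteratedDeriv 2 (Dsym μ ε) 0 ≠ 0 := by
      rw [iteratedDeriv_two]
      have : (2*(ε:ℂ) - 2*(ε:ℂ)*(μ:ℂ)) = ((2*ε*(1-μ) : ℝ) : ℂ) := by push_cast; ring
      rw [this, Complex.ofReal_ne_zero]
      have : (1:ℝ) - μ ≠ 0 := sub_ne_zero.2 (Ne.symm hμ)
      positivity
    -- uniqueness
    have huniq : ∀ z ∈ ball (0 : ℂ) (0.9 * Real.pi), z ≠ 0 → Dsym μ ε z = 0 → z = y := by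
      intro z hz hz0 hDz
      have hzπ : ‖z‖ < Real.pi := by
        have : ‖z‖ < 0.9 * Real.pi := by simpa [mem_ball, dist_zero_right] using hz
        linarith
      have hgz : gsin z ≠ 0 := gsin_ne_zero hzπ
      have hHz : (ε:ℂ) - (ε:ℂ)*(μ:ℂ)*gsin z^2 + 2*Complex.I*z*gsin z^2 = 0 := by
        rw [Dsym_factor] at hDz
        rcases mul_eq_zero.1 hDz with h | h
        · exact absurd (pow_eq_zero_iff (by norm_num)|>.1 h) hz0
        · exact h
      have hzfix : z = (ε:ℂ) * Phi μ z := (fixed_iff μ ε hgz).1 hHz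
      have hznorm : ‖z‖ ≤ ε * M := by
        rw [hzfix, show ((ε:ℂ) * Phi μ z : ℂ) = f z from rfl, hnorm_f]
        exact mul_le_mul_of_nonneg_left (hΦb z (ball_subset_closedBall hz)) hε.le
      have hzs : z ∈ s := by
        simp only [hs_def, mem_closedBall, dist_zero_right]; linarith
      have hd : dist z y ≤ ε * ((K:ℝ) * dist z y) := by
        calc dist z y = dist (f z) (f y) := by rw [show f z = z from hzfix.symm, show f y = y from hyfix']
          _ = ε * dist (Phi μ z) (Phi μ y) := by
              simp only [hf_def, dist_eq_norm, ← mul_sub, norm_mul, Complex.norm_real]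
              rw [Real.norm_of_nonneg hε.le]
          _ ≤ ε * ((K:ℝ) * dist z y) := mul_le_mul_of_nonneg_left (hdist z hzs y hys) hε.le
      have : dist z y ≤ (1/2) * dist z y := by nlinarith [dist_nonneg (x := z) (y := y)]
      have : dist z y = 0 := by nlinarith [dist_nonneg (x := z) (y := y)]
      exact dist_eq_zero.1 this
    -- the expansion
    have hexp : ‖y - Complex.I * ε / 2 * (1 - μ)‖ ≤ ((K:ℝ)*M) * ε ^ 2 := by
      have h0 : Complex.I * ε / 2 * (1 - μ) = (ε:ℂ) * Phi μ 0 := by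
        rw [Phi_zero]; push_cast; ring
      rw [h0, ← hyfix']
      have : ‖(ε:ℂ) * Phi μ y - (ε:ℂ) * Phi μ 0‖ = ε * dist (Phi μ y) (Phi μ 0) := by
        simp only [dist_eq_norm, ← mul_sub, norm_mul, Complex.norm_real]
        rw [Real.norm_of_nonneg hε.le]
      rw [this]
      have h2 : dist (Phi μ y) (Phi μ 0) ≤ (K:ℝ) * ‖y‖ := by
        have := hdist y hys 0 (mem_closedBall_self hrpos.le)
        simpa [dist_zero_right] using this
      calc ε * dist (Phi μ y) (Phi μ 0) ≤ ε * ((K:ℝ) * ‖y‖) :=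
            mul_le_mul_of_nonneg_left h2 hε.le
        _ ≤ ε * ((K:ℝ) * (ε * M)) := by
            apply mul_le_mul_of_nonneg_left _ hε.le
            exact mul_le_mul_of_nonneg_left hyεM hKnn
        _ = ((K:ℝ)*M) * ε ^ 2 := by ring
    refine ⟨y, by simp [Dsym], by rw [deriv_Dsym]; simp [dD], hD2, ?_, hyne, hDy, hderivy, huniq, hexp⟩
    simp only [mem_ball, dist_zero_right]
    nlinarith
  refine ⟨ε₀, hε₀pos, fun ε => if h : 0 < ε ∧ ε < ε₀ then (key ε h.1 h.2).choose else 0,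
    (K:ℝ)*M, ?_⟩
  intro ε h1 h2
  have hspec := (key ε h1 h2).choose_spec
  simp only [dif_pos (And.intro h1 h2)]
  exact hspec
end

section
/- Let μ ∈ ℝ, M > 0. There exist ε₀ > 0 and C > 0 such that for all 0 < ε < ε₀ and all z ∈ ℂ with |Re z| ≥ 0.8π and |Im z| ≤ Mπε, the function A_ε^μ(z) = ε sin²(z)/(εz² - εμ sin²(z) + 2iz sin²(z)) satisfies |A_ε^μ(z)| ≤ Cε/|z|. -/
open Complex

private lemma sinh_small {t : ℝ} (h0 : 0 ≤ t) (h1 : t ≤ 1/4) : Real.sinh t ≤ 2 * t := by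
  have h2 : 1 - 2*t ≤ Real.exp (-(2*t)) := by
    have := Real.add_one_le_exp (-(2*t)); linarith
  have hmul : Real.exp (2*t) * Real.exp (-(2*t)) = 1 := by
    rw [← Real.exp_add]; norm_num
  have hpos : 0 < Real.exp (2*t) := Real.exp_pos _
  have h4 : Real.exp (2*t) ≤ 1 + 4*t := by
    nlinarith [hpos, h2, hmul]
  have h5 : Real.exp (-t) ≤ 1 := by
    rw [Real.exp_le_one_iff]; linarith
  have h6 : Real.exp t = Real.exp (-t) * Real.exp (2*t) := by
    rw [← Real.exp_add]; ring_nf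
  have h7 : Real.exp t - Real.exp (-t) ≤ 4*t := by
    have hE0 : 0 < Real.exp (-t) := Real.exp_pos _
    nlinarith [h4, h5, h6, hE0]
  rw [Real.sinh_eq]; linarith

private lemma norm_lb (a b c : ℂ) : ‖a‖ - ‖b‖ - ‖c‖ ≤ ‖a - b + c‖ := by
  have h := norm_add_le (a - b + c) (b - c)
  have h2 : a - b + c + (b - c) = a := by ring
  rw [h2] at h
  have h3 := norm_sub_le b c
  linarith

private lemma norm_lb' (a b c : ℂ) : ‖c‖ - ‖a‖ - ‖b‖ ≤ ‖a - b + c‖ := by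
  have h := norm_add_le (a - b + c) (b - a)
  have h2 : a - b + c + (b - a) = c := by ring
  rw [h2] at h
  have h3 := norm_sub_le b a
  linarith

set_option maxHeartbeats 1000000 in
theorem symbol_tail_estimate (μ M : ℝ) (hM : 0 < M) :
    ∃ ε₀ > (0:ℝ), ∃ C > (0:ℝ), ∀ ε : ℝ, 0 < ε → ε < ε₀ →
      ∀ z : ℂ, 0.8 * Real.pi ≤ |z.re| → |z.im| ≤ M * Real.pi * ε →
        ‖(ε : ℂ) * Complex.sin z ^ 2 /
            ((ε : ℂ) * z ^ 2 - (ε : ℂ) * (μ : ℂ) * Complex.sin z ^ 2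
              + 2 * Complex.I * z * Complex.sin z ^ 2)‖
          ≤ C * ε / ‖z‖ := by
  have hπ : (3:ℝ) < Real.pi := Real.pi_gt_three
  have hP0 : 0 < M * Real.pi := by positivity
  set P := M * Real.pi with hPdef
  set L : ℝ := 16*P^2 + 8*|μ| * P + 3*P + |μ| + 1 with hLdef
  have hL1 : 1 ≤ L := by nlinarith [abs_nonneg μ, sq_nonneg P, hP0]
  have hL0 : 0 < L := by linarith
  refine ⟨3/(50*L), by positivity, 2, by norm_num, ?_⟩
  intro ε hε hεe z hre him
  have hLε : L * ε ≤ 3/50 := by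
    rw [lt_div_iff₀ (by positivity)] at hεe
    nlinarith
  set x := z.re with hxdef
  set y := z.im with hydef
  set sr := Real.sin x with hsrdef
  set cr := Real.cos x with hcrdef
  set sh := Real.sinh y with hshdef
  set ch := Real.cosh y with hchdef
  set S := Complex.sin z ^ 2 with hSdef
  set N := ‖S‖ with hNdef
  set r := ‖z‖ with hrdef
  -- basic bounds
  have hPL : 3 * P ≤ L := by nlinarith [abs_nonneg μ, sq_nonneg P, hP0]
  have hμL : |μ| ≤ L := by nlinarith [abs_nonneg μ, sq_nonneg P, hP0]
  have hPε : P * ε ≤ 1/50 := by nlinarith [hPL, hε, hP0]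
  have hμε : |μ| * ε ≤ 3/50 := by nlinarith [hμL, hε, abs_nonneg μ]
  have hPεpos : 0 < P * ε := by positivity
  have hP2 : 16 * P^2 * ε ≤ 3/50 := by
    have h := mul_nonneg (by positivity : (0:ℝ) ≤ 8*|μ| * P + 3*P + |μ| + 1) hε.le
    nlinarith
  have hμP : 8 * |μ| * P * ε ≤ 3/50 := by
    have h := mul_nonneg (by positivity : (0:ℝ) ≤ 16*P^2 + 3*P + |μ| + 1) hε.le
    nlinarith
  have hy : |y| ≤ P * ε := him
  have hy1 : |y| ≤ 1/50 := le_trans hy hPε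
  have hsh : |sh| ≤ 2 * (P * ε) := by
    rw [hshdef, Real.abs_sinh]
    calc Real.sinh |y| ≤ 2 * |y| := sinh_small (abs_nonneg y) (by linarith)
      _ ≤ 2 * (P * ε) := by linarith
  have hsh1 : |sh| ≤ 1/25 := by linarith
  have hch1 : 1 ≤ ch := Real.one_le_cosh y
  have hch_sq : ch^2 = sh^2 + 1 := Real.cosh_sq y
  have hpyth : sr^2 + cr^2 = 1 := Real.sin_sq_add_cos_sq x
  have hch2 : ch ≤ 2 := by
    have h2 : sh^2 ≤ (1/25)^2 := by
      rw [← _root_.sq_abs sh]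
      exact pow_le_pow_left₀ (abs_nonneg sh) hsh1 2
    nlinarith
  have hsr1 : sr^2 ≤ 1 := Real.sin_sq_le_one x
  have hcr1 : cr^2 ≤ 1 := Real.cos_sq_le_one x
  -- sin z in coordinates
  have hsin : Complex.sin z = ((sr * ch : ℝ) : ℂ) + ((cr * sh : ℝ) : ℂ) * Complex.I := by
    rw [Complex.sin_eq, ← hxdef, ← hydef, ← Complex.ofReal_sin, ← Complex.ofReal_cos,
      ← Complex.ofReal_sinh, ← Complex.ofReal_cosh, ← hsrdef, ← hcrdef, ← hshdef, ← hchdef]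
    push_cast
    ring
  have hsinre : (Complex.sin z).re = sr * ch := by rw [hsin]; simp
  have hsinim : (Complex.sin z).im = cr * sh := by rw [hsin]; simp
  have hNval : N = sr^2 + sh^2 := by
    have h : N = (Complex.sin z).re^2 + (Complex.sin z).im^2 := by
      rw [hNdef, hSdef, norm_pow, Complex.sq_norm, Complex.normSq_apply]
      ring
    rw [h, hsinre, hsinim]
    linear_combination sr^2 * hch_sq + sh^2 * hpyth
  have hSre : S.re = (sr*ch)^2 - (cr*sh)^2 := by
    rw [hSdef, pow_two, Complex.mul_re, hsinre, hsinim]; ring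
  have hSim : S.im = 2*(sr*ch)*(cr*sh) := by
    rw [hSdef, pow_two, Complex.mul_im, hsinre, hsinim]; ring
  -- geometry of z
  have hx24 : 2.4 ≤ |x| := by linarith [hre, hπ]
  have hrx : |x| ≤ r := by rw [hrdef]; exact Complex.abs_re_le_norm z
  have hr24 : 2.4 ≤ r := le_trans hx24 hrx
  have hr0 : 0 < r := by linarith
  have hrsq : r^2 = x^2 + y^2 := by
    rw [hrdef, Complex.sq_norm, Complex.normSq_apply]; ring
  have hrup : r ≤ 1.5 * |x| := by
    have hy2 : y^2 ≤ (1/50:ℝ)^2 := by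
      rw [← _root_.sq_abs y]; exact pow_le_pow_left₀ (abs_nonneg y) hy1 2
    have hx2 : (2.4:ℝ)^2 ≤ x^2 := by
      rw [← _root_.sq_abs x]; exact pow_le_pow_left₀ (by norm_num) hx24 2
    have hsq : r^2 ≤ (1.5*|x|)^2 := by
      have hrw : (1.5*|x|)^2 = 2.25*x^2 := by
        rw [mul_pow, _root_.sq_abs]; norm_num
      rw [hrw]
      linarith [hrsq, hy2, hx2]
    have h15 : (0:ℝ) ≤ 1.5*|x| := by positivity
    exact (pow_le_pow_iff_left₀ hr0.le h15 two_ne_zero).mp hsq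
  have hN0 : 0 ≤ N := norm_nonneg _
  -- norms of the three terms
  have n1 : ‖(ε:ℂ) * z^2‖ = ε * r^2 := by
    rw [norm_mul, norm_pow, Complex.norm_real, Real.norm_eq_abs, abs_of_pos hε]
  have n2 : ‖(ε:ℂ) * (μ:ℂ) * S‖ = ε * |μ| * N := by
    rw [norm_mul, norm_mul, Complex.norm_real, Complex.norm_real, Real.norm_eq_abs,
      Real.norm_eq_abs, abs_of_pos hε]
  have n3 : ‖2 * Complex.I * z * S‖ = 2 * r * N := by
    rw [norm_mul, norm_mul, norm_mul, Complex.norm_I]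
    simp [hrdef, hNdef]
  -- key lower bound for the denominator
  have key : r * N / 2 ≤ ‖(ε:ℂ) * z^2 - (ε:ℂ) * (μ:ℂ) * S + 2 * Complex.I * z * S‖ := by
    have hmuN : ε * |μ| * N ≤ r * N / 2 := by
      have a1 : ε * |μ| ≤ 1 := by linarith [hμε]
      have a2 : (ε * |μ|) * N ≤ 1 * N := mul_le_mul_of_nonneg_right a1 hN0
      have a3 : 2.4 * N ≤ r * N := mul_le_mul_of_nonneg_right hr24 hN0
      linarith [hN0]
    rcases le_or_gt (ε * r) (N/2) with hB | h1
    · -- regime B : 2izS dominates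
      have h := norm_lb' ((ε:ℂ) * z^2) ((ε:ℂ) * (μ:ℂ) * S) (2 * Complex.I * z * S)
      rw [n1, n2, n3] at h
      have h2 : ε * r^2 ≤ r * N / 2 := by
        have := mul_le_mul_of_nonneg_right hB hr0.le
        linarith [this]
      linarith [h, h2, hmuN, mul_nonneg hr0.le hN0]
    · rcases le_or_gt (4 * N) (ε * r) with hA | h2
      · -- regime A : εz² dominates
        have h := norm_lb ((ε:ℂ) * z^2) ((ε:ℂ) * (μ:ℂ) * S) (2 * Complex.I * z * S)
        rw [n1, n2, n3] at h
        have h2 : 4 * N * r ≤ ε * r^2 := by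
          have := mul_le_mul_of_nonneg_right hA hr0.le
          linarith [this]
        linarith [h, h2, hmuN, mul_nonneg hr0.le hN0]
      · -- regime C : middle range, use the imaginary part
        have hNε : 0.6 * ε ≤ N := by
          have := mul_le_mul_of_nonneg_left hr24 hε.le
          linarith [this]
        have hsh2 : sh^2 ≤ N / 40 := by
          have h1 : sh^2 ≤ (2*(P*ε))^2 := by
            rw [← _root_.sq_abs sh]
            exact pow_le_pow_left₀ (abs_nonneg sh) hsh 2
          have h3 : 4 * P^2 * ε ≤ 3/200 := by linarith
          have h4 : (4 * P^2 * ε) * ε ≤ (3/200) * ε := mul_le_mul_of_nonneg_right h3 hε.le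
          linarith [h1, h4, hNε]
        have hSreLB : 0.95 * N ≤ S.re := by
          rw [hSre]
          have hch21 : 1 ≤ ch^2 := by
            calc (1:ℝ) = 1^2 := by norm_num
              _ ≤ ch^2 := pow_le_pow_left₀ zero_le_one hch1 2
          have a1 : 0 ≤ sr^2 * (ch^2 - 1) := mul_nonneg (sq_nonneg sr) (by linarith)
          have a2 : 0 ≤ (1 - cr^2) * sh^2 := mul_nonneg (by linarith) (sq_nonneg sh)
          linarith [a1, a2, hNval, hsh2]
        have hSre0 : 0 ≤ S.re := by linarith [hSreLB, hNε, hε.le]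
        have hSimUB : |S.im| ≤ 8 * (P * ε) := by
          rw [hSim]
          have h1 : |2*(sr*ch)*(cr*sh)| = 2 * (|sr| * ch) * (|cr| * |sh|) := by
            rw [abs_mul, abs_mul, abs_mul, abs_mul, abs_of_pos (by linarith : (0:ℝ) < ch)]
            norm_num
          rw [h1]
          have hsra : |sr| ≤ 1 := Real.abs_sin_le_one x
          have hcra : |cr| ≤ 1 := Real.abs_cos_le_one x
          have b1 : |sr| * ch ≤ 1 * 2 :=
            mul_le_mul hsra hch2 (by linarith) zero_le_one
          have b2 : |cr| * |sh| ≤ 1 * (2*(P*ε)) :=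
            mul_le_mul hcra hsh (abs_nonneg sh) zero_le_one
          have b3 : (|sr| * ch) * (|cr| * |sh|) ≤ (1*2) * (1*(2*(P*ε))) :=
            mul_le_mul b1 b2 (mul_nonneg (abs_nonneg cr) (abs_nonneg sh)) (by norm_num)
          linarith [b3]
        have hDim : ((ε:ℂ) * z^2 - (ε:ℂ) * (μ:ℂ) * S + 2 * Complex.I * z * S).im
            = 2*x*S.re + (2*ε*x*y - ε*μ*S.im - 2*y*S.im) := by
          simp [Complex.add_im, Complex.sub_im, Complex.mul_im, Complex.mul_re,
            Complex.I_re, Complex.I_im, Complex.ofReal_re, Complex.ofReal_im, pow_two,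
            ← hxdef, ← hydef]
          ring
        have habs : |((ε:ℂ) * z^2 - (ε:ℂ) * (μ:ℂ) * S + 2 * Complex.I * z * S).im|
            ≤ ‖(ε:ℂ) * z^2 - (ε:ℂ) * (μ:ℂ) * S + 2 * Complex.I * z * S‖ := by
          exact Complex.abs_im_le_norm _
        have t1 : |2*ε*x*y| ≤ 2*ε*|x| *(P*ε) := by
          rw [abs_mul, abs_mul, abs_mul, abs_of_pos hε, _root_.abs_two]
          have h0 : 0 ≤ 2*ε*|x| := by positivity
          have := mul_le_mul_of_nonneg_left hy h0
          linarith
        have t2 : |ε*μ*S.im| ≤ ε*|μ| * (8*(P*ε)) := by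
          rw [abs_mul, abs_mul, abs_of_pos hε]
          have h0 : 0 ≤ ε*|μ| := by positivity
          have := mul_le_mul_of_nonneg_left hSimUB h0
          linarith
        have t3 : |2*y*S.im| ≤ 2*(P*ε)*(8*(P*ε)) := by
          rw [abs_mul, abs_mul, _root_.abs_two]
          have b1 : 2*|y| ≤ 2*(P*ε) := by linarith
          have b2 : (2*|y|) * |S.im| ≤ (2*(P*ε)) * (8*(P*ε)) :=
            mul_le_mul b1 hSimUB (abs_nonneg _) (by positivity)
          linarith
        have hrest : |2*ε*x*y - ε*μ*S.im - 2*y*S.im|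
            ≤ 2*ε*|x| *(P*ε) + ε*|μ| * (8*(P*ε)) + 2*(P*ε)*(8*(P*ε)) := by
          have u1 : |2*ε*x*y - ε*μ*S.im - 2*y*S.im| ≤ |2*ε*x*y - ε*μ*S.im| + |2*y*S.im| :=
            abs_sub _ _
          have u2 : |2*ε*x*y - ε*μ*S.im| ≤ |2*ε*x*y| + |ε*μ*S.im| := abs_sub _ _
          linarith
        have hmain : 2*|x| * (0.95*N) ≤ |2*x*S.re| := by
          rw [abs_mul, abs_mul, _root_.abs_two, _root_.abs_of_nonneg hSre0]
          have h0 : 0 ≤ 2*|x| := by positivity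
          have := mul_le_mul_of_nonneg_left hSreLB h0
          linarith
        have tri : |2*x*S.re| - |2*ε*x*y - ε*μ*S.im - 2*y*S.im|
            ≤ |2*x*S.re + (2*ε*x*y - ε*μ*S.im - 2*y*S.im)| := by
          have h := abs_add_le (2*x*S.re + (2*ε*x*y - ε*μ*S.im - 2*y*S.im))
            (-(2*ε*x*y - ε*μ*S.im - 2*y*S.im))
          rw [abs_neg] at h
          have h2 : 2*x*S.re + (2*ε*x*y - ε*μ*S.im - 2*y*S.im) + -(2*ε*x*y - ε*μ*S.im - 2*y*S.im)
              = 2*x*S.re := by ring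
          rw [h2] at h
          linarith
        -- numeric pieces
        have e1 : 2*ε*|x| *(P*ε) ≤ (2/50)*(ε*|x|) := by
          have h0 : 0 ≤ 2*(ε*|x|) := by positivity
          have := mul_le_mul_of_nonneg_left hPε h0
          linarith [this]
        have e1' : (2/50)*(ε*|x|) ≤ (1/15)*(|x| *N) := by
          have := mul_le_mul_of_nonneg_left hNε (abs_nonneg x)
          linarith [this]
        have e2 : ε*|μ| * (8*(P*ε)) ≤ 0.1*N := by
          have h4 := mul_le_mul_of_nonneg_right hμP hε.le
          linarith [h4, hNε]
        have e3 : 2*(P*ε)*(8*(P*ε)) ≤ 0.1*N := by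
          have h3 : 16 * P^2 * ε * ε ≤ (3/50) * ε := mul_le_mul_of_nonneg_right hP2 hε.le
          linarith [h3, hNε]
        have p1 : r*N ≤ (1.5*|x|)*N := mul_le_mul_of_nonneg_right hrup hN0
        have p2 : 2.4*N ≤ |x| *N := mul_le_mul_of_nonneg_right hx24 hN0
        have hfin : r * N / 2 ≤ 2*|x| *(0.95*N) - ((1/15)*(|x| *N) + 0.1*N + 0.1*N) := by
          linarith [p1, p2, hN0]
        calc r * N / 2
            ≤ |2*x*S.re| - |2*ε*x*y - ε*μ*S.im - 2*y*S.im| := by linarith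
          _ ≤ |2*x*S.re + (2*ε*x*y - ε*μ*S.im - 2*y*S.im)| := tri
          _ = |((ε:ℂ) * z^2 - (ε:ℂ) * (μ:ℂ) * S + 2 * Complex.I * z * S).im| := by
              rw [hDim]
          _ ≤ _ := habs
  -- conclude
  rw [norm_div, norm_mul, Complex.norm_real, Real.norm_eq_abs, abs_of_pos hε, ← hNdef]
  rcases eq_or_lt_of_le hN0 with hNz | hNpos
  · rw [← hNz]
    have : (0:ℝ) ≤ 2 * ε / r := by positivity
    simpa using this
  · have hD0 : 0 < ‖(ε:ℂ) * z^2 - (ε:ℂ) * (μ:ℂ) * S + 2 * Complex.I * z * S‖ := by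
      have := mul_pos hr0 hNpos
      linarith [key]
    calc ε * N / ‖(ε:ℂ) * z^2 - (ε:ℂ) * (μ:ℂ) * S + 2 * Complex.I * z * S‖
        ≤ ε * N / (r * N / 2) :=
          div_le_div_of_nonneg_left (by positivity) (by positivity) key
      _ = 2 * ε / r := by field_simp
end

section
/- Let μ₊ > 0, ν > 0, and let S : [0,∞) → ℝ be C¹ satisfying μ₊ S(x) + S'(x) = ν Q(x) S(x) + F(x), where Q is continuous, nonnegative, with 0 ≤ ∫_0^x Q(s) ds ≤ C_P for all x > 0, and ∫_0^∞ |F(y)|² exp(2(μ₊ + δ)y) dy ≤ ρ² for some δ > 0, ρ ≥ 0. If S(0) > ρ/√(2δ), then S(x) > 0 for all x ≥ 0 and S(x)·exp(μ₊x) ≥ S(0) - ρ/√(2δ) for all x ≥ 0. -/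
open MeasureTheory Real Set intervalIntegral

theorem lower_bound_positivity_of_wave_derivative
    (μp ν δ ρ CP : ℝ) (hμp : 0 < μp) (hν : 0 < ν) (hδ : 0 < δ) (hρ : 0 ≤ ρ)
    (S Q F : ℝ → ℝ)
    (hS : ∀ x ∈ Ici (0:ℝ), HasDerivAt S (ν * Q x * S x + F x - μp * S x) x)
    (hQc : Continuous Q) (hQ0 : ∀ x, 0 ≤ Q x)
    (hQint : ∀ x > (0:ℝ), ∫ s in (0:ℝ)..x, Q s ≤ CP)
    (hFint : IntegrableOn (fun y => F y ^ 2 * Real.exp (2 * (μp + δ) * y)) (Ici 0))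
    (hFbound : ∫ y in Ici (0:ℝ), F y ^ 2 * Real.exp (2 * (μp + δ) * y) ≤ ρ ^ 2)
    (hS0 : ρ / Real.sqrt (2 * δ) < S 0) :
    ∀ x ∈ Ici (0:ℝ),
      0 < S x ∧ S 0 - ρ / Real.sqrt (2 * δ) ≤ S x * Real.exp (μp * x) := by
  -- basic constants
  set s : ℝ := Real.sqrt (2 * δ) with hs_def
  have hs_pos : 0 < s := Real.sqrt_pos.mpr (by linarith)
  have hs_sq : s ^ 2 = 2 * δ := Real.sq_sqrt (by linarith)
  set K : ℝ := ρ / s with hK_def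
  have hK_nonneg : 0 ≤ K := div_nonneg hρ hs_pos.le
  -- primitive of Q
  set P : ℝ → ℝ := fun x => ∫ t in (0:ℝ)..x, Q t with hP_def
  have hPderiv : ∀ x : ℝ, HasDerivAt P (Q x) x := fun x =>
    (hQc.integral_hasStrictDerivAt 0 x).hasDerivAt
  have hP0 : P 0 = 0 := intervalIntegral.integral_same
  have hPnonneg : ∀ x : ℝ, 0 ≤ x → 0 ≤ P x := fun x hx =>
    intervalIntegral.integral_nonneg hx (fun u _ => hQ0 u)
  -- integrating factor
  set E : ℝ → ℝ := fun x => Real.exp (μp * x - ν * P x) with hE_def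
  have hEpos : ∀ x, 0 < E x := fun x => Real.exp_pos _
  have hEderiv : ∀ x : ℝ, HasDerivAt E ((μp - ν * Q x) * E x) x := by
    intro x
    have h1 : HasDerivAt (fun x : ℝ => μp * x - ν * P x) (μp - ν * Q x) x := by
      have h0 := ((hasDerivAt_id x).const_mul μp).sub ((hPderiv x).const_mul ν)
      simp only [id, mul_one] at h0
      exact h0
    simpa [mul_comm] using h1.exp
  have hEcont : Continuous E :=
    continuous_iff_continuousAt.mpr fun x => (hEderiv x).differentiableAt.continuousAt
  have hEle : ∀ x : ℝ, 0 ≤ x → E x ≤ Real.exp (μp * x) := by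
    intro x hx
    apply Real.exp_le_exp.mpr
    have := hPnonneg x hx
    nlinarith
  -- h = S * E
  set h : ℝ → ℝ := fun x => S x * E x with hh_def
  have hh0 : h 0 = S 0 := by simp [hh_def, hE_def, hP0]
  have hhderiv : ∀ x ∈ Ici (0:ℝ), HasDerivAt h (F x * E x) x := by
    intro x hx
    have := (hS x hx).mul (hEderiv x)
    exact this.congr_deriv (by ring)
  -- measurability of F on subintervals
  have hFmeas : ∀ b : ℝ, 0 ≤ b →
      AEStronglyMeasurable F (volume.restrict (Ioc 0 b)) := by
    intro b hb
    have hSc : ContinuousOn S (Ici (0:ℝ)) := fun x hx =>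
      (hS x hx).continuousAt.continuousWithinAt
    have hSm : AEStronglyMeasurable S (volume.restrict (Ioc 0 b)) :=
      (hSc.mono (fun y hy => le_of_lt hy.1)).aestronglyMeasurable measurableSet_Ioc
    have hgm : AEStronglyMeasurable
        (fun y => deriv S y - ν * Q y * S y + μp * S y) (volume.restrict (Ioc 0 b)) := by
      apply AEStronglyMeasurable.add
      apply AEStronglyMeasurable.sub
      · exact (measurable_deriv S).aestronglyMeasurable
      · exact ((hQc.measurable.const_mul ν).aestronglyMeasurable.mul hSm)
      · exact hSm.const_mul μp
    apply hgm.congr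
    filter_upwards [ae_restrict_mem measurableSet_Ioc] with y hy
    have hyIci : y ∈ Ici (0:ℝ) := le_of_lt hy.1
    have := (hS y hyIci).deriv
    rw [this]; ring
  -- integrability facts on [0, b]
  have hFsq_int : ∀ b : ℝ, 0 ≤ b →
      IntervalIntegrable (fun y => F y ^ 2 * Real.exp (2 * (μp + δ) * y)) volume 0 b := by
    intro b hb
    rw [intervalIntegrable_iff_integrableOn_Ioc_of_le hb]
    exact hFint.mono_set (fun y hy => le_of_lt hy.1)
  have hexp_int : ∀ b : ℝ, IntervalIntegrable (fun y => Real.exp (-(2 * δ) * y)) volume 0 b :=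
    fun b => ((Real.continuous_exp.comp (continuous_const.mul continuous_id))).intervalIntegrable 0 b
  have hDom_int : ∀ b : ℝ, 0 ≤ b →
      IntervalIntegrable (fun y => (F y ^ 2 * Real.exp (2 * (μp + δ) * y) + Real.exp (-(2 * δ) * y)) / 2) volume 0 b := by
    intro b hb
    exact ((hFsq_int b hb).add (hexp_int b)).div_const 2
  -- key pointwise bound: |F y| * exp(μp y) ≤ dominator
  have hptwise : ∀ y : ℝ,
      |F y| * Real.exp (μp * y) ≤ (F y ^ 2 * Real.exp (2 * (μp + δ) * y) + Real.exp (-(2 * δ) * y)) / 2 := by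
    intro y
    have e1 : Real.exp ((μp + δ) * y) * Real.exp (-δ * y) = Real.exp (μp * y) := by
      rw [← Real.exp_add]; ring_nf
    have e2 : Real.exp ((μp + δ) * y) ^ 2 = Real.exp (2 * (μp + δ) * y) := by
      rw [← Real.exp_add] at *
      · rw [sq, ← Real.exp_add]; ring_nf
    have e3 : Real.exp (-δ * y) ^ 2 = Real.exp (-(2 * δ) * y) := by
      rw [sq, ← Real.exp_add]; ring_nf
    have hsq : (0:ℝ) ≤ (|F y| * Real.exp ((μp + δ) * y) - Real.exp (-δ * y)) ^ 2 := sq_nonneg _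
    have habs : |F y| ^ 2 = F y ^ 2 := sq_abs (F y)
    nlinarith [abs_nonneg (F y), Real.exp_pos ((μp + δ) * y), Real.exp_pos (-δ * y)]
  have habsF_int : ∀ b : ℝ, 0 ≤ b →
      IntervalIntegrable (fun y => |F y| * Real.exp (μp * y)) volume 0 b := by
    intro b hb
    rw [intervalIntegrable_iff_integrableOn_Ioc_of_le hb]
    have hDom : IntegrableOn
        (fun y => (F y ^ 2 * Real.exp (2 * (μp + δ) * y) + Real.exp (-(2 * δ) * y)) / 2) (Ioc 0 b) := by
      have := hDom_int b hb
      rwa [intervalIntegrable_iff_integrableOn_Ioc_of_le hb] at this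
    apply MeasureTheory.Integrable.mono hDom
    · exact ((hFmeas b hb).norm.mul
        ((Real.continuous_exp.comp (continuous_const.mul continuous_id)).aestronglyMeasurable))
    · filter_upwards with y
      rw [Real.norm_eq_abs, Real.norm_eq_abs]
      have h1 := hptwise y
      have h2 : 0 ≤ |F y| * Real.exp (μp * y) := mul_nonneg (abs_nonneg _) (Real.exp_pos _).le
      rw [abs_of_nonneg h2]
      exact h1.trans (le_abs_self _)
  have hFE_int : ∀ b : ℝ, 0 ≤ b → IntervalIntegrable (fun y => F y * E y) volume 0 b := by
    intro b hb
    rw [intervalIntegrable_iff_integrableOn_Ioc_of_le hb]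
    have hDom := (habsF_int b hb)
    rw [intervalIntegrable_iff_integrableOn_Ioc_of_le hb] at hDom
    apply MeasureTheory.Integrable.mono hDom
    · exact ((hFmeas b hb).mul hEcont.aestronglyMeasurable)
    · filter_upwards [ae_restrict_mem measurableSet_Ioc] with y hy
      rw [Real.norm_eq_abs, Real.norm_eq_abs, abs_mul]
      have h2 : 0 ≤ |F y| * Real.exp (μp * y) := mul_nonneg (abs_nonneg _) (Real.exp_pos _).le
      rw [abs_of_nonneg h2, abs_of_pos (hEpos y)]
      exact mul_le_mul_of_nonneg_left (hEle y hy.1.le) (abs_nonneg _)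
  -- Duhamel formula
  have hDuhamel : ∀ b : ℝ, 0 ≤ b → h b = S 0 + ∫ y in (0:ℝ)..b, F y * E y := by
    intro b hb
    have heq := intervalIntegral.integral_eq_sub_of_hasDerivAt
      (f := h) (f' := fun y => F y * E y)
      (fun y hy => hhderiv y (by
        rw [uIcc_of_le hb] at hy
        exact hy.1)) (hFE_int b hb)
    rw [heq, hh0]; ring
  -- AM-GM bound with parameter a
  have hbound_a : ∀ a : ℝ, 0 < a → ∀ b : ℝ, 0 ≤ b →
      ∫ y in (0:ℝ)..b, |F y| * Real.exp (μp * y) ≤ ρ ^ 2 / (2 * a) + a / (4 * δ) := by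
    intro a ha b hb
    have h2a : (0:ℝ) < 2 * a := by linarith
    have hRHSint : IntervalIntegrable
        (fun y => (1 / (2 * a)) * (F y ^ 2 * Real.exp (2 * (μp + δ) * y))
          + (a / 2) * Real.exp (-(2 * δ) * y)) volume 0 b :=
      ((hFsq_int b hb).const_mul _).add ((hexp_int b).const_mul _)
    have step1 : ∫ y in (0:ℝ)..b, |F y| * Real.exp (μp * y) ≤
        ∫ y in (0:ℝ)..b, ((1 / (2 * a)) * (F y ^ 2 * Real.exp (2 * (μp + δ) * y))
          + (a / 2) * Real.exp (-(2 * δ) * y)) := by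
      apply intervalIntegral.integral_mono_on hb (habsF_int b hb) hRHSint
      intro y _
      have e1 : Real.exp ((μp + δ) * y) * Real.exp (-δ * y) = Real.exp (μp * y) := by
        rw [← Real.exp_add]; ring_nf
      have e2 : Real.exp ((μp + δ) * y) ^ 2 = Real.exp (2 * (μp + δ) * y) := by
        rw [sq, ← Real.exp_add]; ring_nf
      have e3 : Real.exp (-δ * y) ^ 2 = Real.exp (-(2 * δ) * y) := by
        rw [sq, ← Real.exp_add]; ring_nf
      have habs : |F y| ^ 2 = F y ^ 2 := sq_abs (F y)
      have hsq := sq_nonneg (|F y| * Real.exp ((μp + δ) * y) - a * Real.exp (-δ * y))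
      have key : 2 * a * (|F y| * Real.exp (μp * y)) ≤
          F y ^ 2 * Real.exp (2 * (μp + δ) * y) + a ^ 2 * Real.exp (-(2 * δ) * y) := by
        have expand : F y ^ 2 * Real.exp (2 * (μp + δ) * y) + a ^ 2 * Real.exp (-(2 * δ) * y)
            - 2 * a * (|F y| * Real.exp (μp * y))
            = (|F y| * Real.exp ((μp + δ) * y) - a * Real.exp (-δ * y)) ^ 2 := by
          rw [← e1, ← e2, ← e3, ← habs]; ring
        linarith [hsq, expand]
      rw [show (1 / (2 * a)) * (F y ^ 2 * Real.exp (2 * (μp + δ) * y))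
            + (a / 2) * Real.exp (-(2 * δ) * y)
          = (F y ^ 2 * Real.exp (2 * (μp + δ) * y) + a ^ 2 * Real.exp (-(2 * δ) * y)) / (2 * a)
        from by field_simp, le_div_iff₀ h2a]
      linarith
    have step2 : ∫ y in (0:ℝ)..b, ((1 / (2 * a)) * (F y ^ 2 * Real.exp (2 * (μp + δ) * y))
          + (a / 2) * Real.exp (-(2 * δ) * y))
        = (1 / (2 * a)) * (∫ y in (0:ℝ)..b, F y ^ 2 * Real.exp (2 * (μp + δ) * y))
          + (a / 2) * (∫ y in (0:ℝ)..b, Real.exp (-(2 * δ) * y)) := by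
      rw [intervalIntegral.integral_add ((hFsq_int b hb).const_mul _) ((hexp_int b).const_mul _),
        intervalIntegral.integral_const_mul, intervalIntegral.integral_const_mul]
    have IA : ∫ y in (0:ℝ)..b, F y ^ 2 * Real.exp (2 * (μp + δ) * y) ≤ ρ ^ 2 := by
      rw [intervalIntegral.integral_of_le hb]
      refine le_trans (setIntegral_mono_set hFint ?_ ?_) hFbound
      · exact ae_of_all _ fun y => mul_nonneg (sq_nonneg _) (Real.exp_pos _).le
      · exact HasSubset.Subset.eventuallyLE (fun y hy => le_of_lt hy.1)
    have IB : ∫ y in (0:ℝ)..b, Real.exp (-(2 * δ) * y) ≤ 1 / (2 * δ) := by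
      have hA : ∀ y : ℝ, HasDerivAt (fun y => -(Real.exp (-(2 * δ) * y) / (2 * δ)))
          (Real.exp (-(2 * δ) * y)) y := by
        intro y
        have := (((hasDerivAt_id y).const_mul (-(2 * δ))).exp.div_const (2 * δ)).neg
        refine this.congr_deriv ?_
        simp only [id]
        field_simp
      have hI := intervalIntegral.integral_eq_sub_of_hasDerivAt
        (fun y _ => hA y) (hexp_int b)
      rw [hI]
      have h1 : Real.exp (-(2 * δ) * 0) = 1 := by norm_num
      have h2 : 0 < Real.exp (-(2 * δ) * b) := Real.exp_pos _
      rw [h1]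
      have h3 : 0 ≤ Real.exp (-(2 * δ) * b) / (2 * δ) := by positivity
      linarith
    rw [step2] at step1
    refine step1.trans ?_
    have c1 : (0:ℝ) ≤ 1 / (2 * a) := by positivity
    have c2 : (0:ℝ) ≤ a / 2 := by positivity
    calc (1 / (2 * a)) * (∫ y in (0:ℝ)..b, F y ^ 2 * Real.exp (2 * (μp + δ) * y))
          + (a / 2) * (∫ y in (0:ℝ)..b, Real.exp (-(2 * δ) * y))
        ≤ (1 / (2 * a)) * ρ ^ 2 + (a / 2) * (1 / (2 * δ)) := by
          gcongr
      _ = ρ ^ 2 / (2 * a) + a / (4 * δ) := by ring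
  -- optimal bound
  have hIbound : ∀ b : ℝ, 0 ≤ b → ∫ y in (0:ℝ)..b, |F y| * Real.exp (μp * y) ≤ K := by
    intro b hb
    apply le_of_forall_pos_le_add
    intro ε hε
    have ha : 0 < ρ * s + 4 * δ * ε :=
      add_pos_of_nonneg_of_pos (mul_nonneg hρ hs_pos.le) (by positivity)
    refine (hbound_a (ρ * s + 4 * δ * ε) ha b hb).trans ?_
    have h1 : ρ ^ 2 / (2 * (ρ * s + 4 * δ * ε)) ≤ ρ / (2 * s) := by
      rcases eq_or_lt_of_le hρ with hr | hr
      · rw [← hr]; norm_num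
      · rw [div_le_div_iff₀ (by linarith) (by linarith)]
        nlinarith [mul_nonneg (mul_nonneg hρ hδ.le) hε.le]
    have hrs : ρ * s / (4 * δ) = ρ / (2 * s) := by
      rw [div_eq_div_iff (by positivity) (by positivity)]
      linear_combination 2 * ρ * hs_sq
    have h2 : (ρ * s + 4 * δ * ε) / (4 * δ) = ρ / (2 * s) + ε := by
      rw [add_div, hrs, mul_comm (4 * δ) ε, mul_div_assoc,
        div_self (by positivity : (4:ℝ) * δ ≠ 0), mul_one]
    rw [h2]
    have h3 : ρ / (2 * s) + ρ / (2 * s) = K := by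
      rw [hK_def]; field_simp [hs_pos.ne']; ring
    linarith
  -- conclusion
  intro x hx
  have hx0 : (0:ℝ) ≤ x := hx
  have hIabs : |∫ y in (0:ℝ)..x, F y * E y| ≤ K := by
    calc |∫ y in (0:ℝ)..x, F y * E y|
        ≤ ∫ y in (0:ℝ)..x, |F y * E y| :=
          intervalIntegral.abs_integral_le_integral_abs hx0
      _ ≤ ∫ y in (0:ℝ)..x, |F y| * Real.exp (μp * y) := by
          apply intervalIntegral.integral_mono_on hx0 ((hFE_int x hx0).abs) (habsF_int x hx0)
          intro y hy
          rw [abs_mul, abs_of_pos (hEpos y)]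
          exact mul_le_mul_of_nonneg_left (hEle y hy.1) (abs_nonneg _)
      _ ≤ K := hIbound x hx0
  have hhx : S 0 - K ≤ h x := by
    rw [hDuhamel x hx0]
    have := (abs_le.mp hIabs).1
    linarith
  have hhpos : 0 < S x * E x := by
    have : (0:ℝ) < S 0 - K := by linarith
    have hx' : S 0 - K ≤ S x * E x := hhx
    linarith
  have hSxpos : 0 < S x := by
    rcases mul_pos_iff.mp hhpos with ⟨h1, _⟩ | ⟨_, h2⟩
    · exact h1
    · linarith [hEpos x]
  refine ⟨hSxpos, ?_⟩
  have hexpP : 1 ≤ Real.exp (ν * P x) := Real.one_le_exp (mul_nonneg hν.le (hPnonneg x hx0))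
  have hfac : S x * Real.exp (μp * x) = (S x * E x) * Real.exp (ν * P x) := by
    rw [hE_def, mul_assoc, ← Real.exp_add]; ring_nf
  calc S 0 - K ≤ S x * E x := hhx
    _ ≤ (S x * E x) * Real.exp (ν * P x) := le_mul_of_one_le_right hhpos.le hexpP
    _ = S x * Real.exp (μp * x) := hfac.symm
end
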